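/- Let d ≥ 1 and D > 0, and let M be the normalized Maxwellian on ℝ^d. There exist constants C > 0 and C_M > 0, depending only on d and D, with the following property: for every ε > 0, every r ∈ (0,1], and every measurable f : ℝ^d → [0,∞) with ρ := ∫_{ℝ^d} f(ξ) dξ ∈ (0,∞) and ∫_{ℝ^d} |ξ| f(ξ) dξ < ∞, setting J := ε^{-1} ∫_{ℝ^d} ξ (f(ξ) − ρ M(ξ)) dξ ∈ ℝ^d, one has |J| ≤ r ε ∫_{ℝ^d} 𝒟(ξ) dξ + C r^{-d} exp(2 C_M / r²) ρ^{1/2} (∫_{ℝ^d} 𝒟(ξ) dξ)^{1/2}, the inequality being understood in [0,∞]. -/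

import Mathlib

open MeasureTheory
open scoped ENNReal Classical

/-- The normalized Maxwellian on `ℝ^d` with diffusion coefficient `D`:
`M(ξ) = (2πD)^{-d/2} exp(−|ξ|²/(2D))`. -/
noncomputable def maxwellian (d : ℕ) (D : ℝ) (ξ : EuclideanSpace ℝ (Fin d)) : ℝ :=
  (2 * Real.pi * D) ^ (-(d : ℝ) / 2) * Real.exp (-‖ξ‖ ^ 2 / (2 * D))

/-- The dissipation density `𝒟(ξ) = ε⁻² (f(ξ) − ρM(ξ))(log f(ξ) − log (ρM(ξ)))`, as a
`[0,∞]`-valued function: it is `+∞` at points where `f` vanishes but `ρM` does not,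
and given by the obvious formula elsewhere (in particular `0` where `f = ρM`). -/
noncomputable def dissipation (d : ℕ) (D ε ρ : ℝ) (f : EuclideanSpace ℝ (Fin d) → ℝ)
    (ξ : EuclideanSpace ℝ (Fin d)) : ℝ≥0∞ :=
  if f ξ = 0 ∧ ρ * maxwellian d D ξ ≠ 0 then ⊤
  else ENNReal.ofReal
    ((f ξ - ρ * maxwellian d D ξ) * (Real.log (f ξ) - Real.log (ρ * maxwellian d D ξ)) / ε ^ 2)

private lemma sqrt_exp_eq (t : ℝ) : Real.sqrt (Real.exp t) = Real.exp (t / 2) := by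
  rw [show Real.exp t = (Real.exp (t / 2)) ^ 2 by
    rw [sq, ← Real.exp_add, add_halves]]
  exact Real.sqrt_sq (Real.exp_pos _).le

private lemma diff_mul_log_eq_abs {a b : ℝ} (ha : 0 < a) (hb : 0 < b) :
    (a - b) * (Real.log a - Real.log b) = |a - b| * |Real.log a - Real.log b| := by
  rcases le_total a b with h | h
  · rw [abs_of_nonpos (sub_nonpos.2 h),
      abs_of_nonpos (sub_nonpos.2 ((Real.log_le_log_iff ha hb).2 h))]
    ring
  · rw [abs_of_nonneg (sub_nonneg.2 h),
      abs_of_nonneg (sub_nonneg.2 ((Real.log_le_log_iff hb ha).2 h))]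

private lemma sqrt_diff_sq_le_aux {a b : ℝ} (hb : 0 < b) (hab : b ≤ a) :
    (Real.sqrt a - Real.sqrt b) ^ 2 ≤ (a - b) * (Real.log a - Real.log b) := by
  have ha : 0 < a := lt_of_lt_of_le hb hab
  set u := Real.sqrt a with hu_def
  set v := Real.sqrt b with hv_def
  have hu : 0 < u := Real.sqrt_pos.2 ha
  have hv : 0 < v := Real.sqrt_pos.2 hb
  have huv : v ≤ u := Real.sqrt_le_sqrt hab
  have ha' : a = u ^ 2 := (Real.sq_sqrt ha.le).symm
  have hb' : b = v ^ 2 := (Real.sq_sqrt hb.le).symm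
  have hlog : Real.log a - Real.log b = 2 * (Real.log u - Real.log v) := by
    rw [ha', hb', Real.log_pow, Real.log_pow]; push_cast; ring
  set w := Real.log u - Real.log v with hw_def
  have hkey : u - v ≤ w * u := by
    have h1 := Real.log_le_sub_one_of_pos (show 0 < v / u by positivity)
    rw [Real.log_div hv.ne' hu.ne'] at h1
    have h2 : 1 - v / u ≤ w := by rw [hw_def]; linarith
    calc u - v = (1 - v / u) * u := by field_simp
      _ ≤ w * u := mul_le_mul_of_nonneg_right h2 hu.le
  have hw0 : 0 ≤ w := by
    rw [hw_def, sub_nonneg]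
    exact (Real.log_le_log_iff hv hu).2 huv
  rw [hlog, ha', hb']
  nlinarith [mul_le_mul_of_nonneg_left hkey (sub_nonneg.2 huv),
    mul_nonneg (mul_nonneg (sub_nonneg.2 huv) hw0) (by positivity : (0:ℝ) ≤ u + 2 * v)]

private lemma sqrt_diff_sq_le {a b : ℝ} (ha : 0 < a) (hb : 0 < b) :
    (Real.sqrt a - Real.sqrt b) ^ 2 ≤ (a - b) * (Real.log a - Real.log b) := by
  rcases le_total b a with h | h
  · exact sqrt_diff_sq_le_aux hb h
  · have h2 := sqrt_diff_sq_le_aux ha h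
    calc (Real.sqrt a - Real.sqrt b) ^ 2 = (Real.sqrt b - Real.sqrt a) ^ 2 := by ring
      _ ≤ (b - a) * (Real.log b - Real.log a) := h2
      _ = (a - b) * (Real.log a - Real.log b) := by ring

private lemma key_pointwise {a b x r : ℝ} (ha : 0 < a) (hb : 0 < b) (hr : 0 < r)
    (hx : 0 ≤ x) :
    x * |a - b| ≤ r * ((a - b) * (Real.log a - Real.log b))
      + 2 * x * Real.exp (x / (2 * r)) * Real.sqrt b * |Real.sqrt a - Real.sqrt b| := by
  have hsign := diff_mul_log_eq_abs ha hb
  by_cases hcase : x ≤ r * |Real.log a - Real.log b|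
  · have h1 : x * |a - b| ≤ (r * |Real.log a - Real.log b|) * |a - b| :=
      mul_le_mul_of_nonneg_right hcase (abs_nonneg _)
    have h2 : 0 ≤ 2 * x * Real.exp (x / (2 * r)) * Real.sqrt b
        * |Real.sqrt a - Real.sqrt b| := by positivity
    calc x * |a - b| ≤ r * (|a - b| * |Real.log a - Real.log b|) := by linarith [h1]
      _ = r * ((a - b) * (Real.log a - Real.log b)) := by rw [hsign]
      _ ≤ _ := by linarith
  · push_neg at hcase
    have hxr : |Real.log a - Real.log b| < x / r := by
      rw [lt_div_iff₀ hr]; linarith [hcase]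
    have hab : a ≤ b * Real.exp (x / r) := by
      have hla : Real.log a < Real.log b + x / r := by
        have := abs_lt.1 hxr
        linarith [this.2]
      have := Real.exp_lt_exp.2 hla
      rw [Real.exp_log ha, Real.exp_add, Real.exp_log hb] at this
      exact this.le
    have hsa : Real.sqrt a ≤ Real.sqrt b * Real.exp (x / (2 * r)) := by
      have h3 : Real.sqrt a ≤ Real.sqrt (b * Real.exp (x / r)) := Real.sqrt_le_sqrt hab
      rwa [Real.sqrt_mul hb.le, sqrt_exp_eq, show x / r / 2 = x / (2 * r) by ring] at h3
    have hsb : Real.sqrt b ≤ Real.sqrt b * Real.exp (x / (2 * r)) := by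
      nlinarith [Real.one_le_exp (by positivity : (0:ℝ) ≤ x / (2 * r)), Real.sqrt_nonneg b]
    have habs : |a - b| = |Real.sqrt a - Real.sqrt b| * (Real.sqrt a + Real.sqrt b) := by
      rw [show a - b = (Real.sqrt a - Real.sqrt b) * (Real.sqrt a + Real.sqrt b) by
        nlinarith [Real.sq_sqrt ha.le, Real.sq_sqrt hb.le], abs_mul,
        abs_of_nonneg (by positivity : (0:ℝ) ≤ Real.sqrt a + Real.sqrt b)]
    have hfirst : 0 ≤ r * ((a - b) * (Real.log a - Real.log b)) := by
      rw [hsign]; positivity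
    have h4 : Real.sqrt a + Real.sqrt b ≤ 2 * Real.sqrt b * Real.exp (x / (2 * r)) := by
      linarith
    calc x * |a - b| = x * (|Real.sqrt a - Real.sqrt b| * (Real.sqrt a + Real.sqrt b)) := by
          rw [habs]
      _ ≤ x * (|Real.sqrt a - Real.sqrt b| * (2 * Real.sqrt b * Real.exp (x / (2 * r)))) := by
          apply mul_le_mul_of_nonneg_left _ hx
          exact mul_le_mul_of_nonneg_left h4 (abs_nonneg _)
      _ = 2 * x * Real.exp (x / (2 * r)) * Real.sqrt b * |Real.sqrt a - Real.sqrt b| := by ring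
      _ ≤ _ := by linarith

private lemma integrable_exp_gauss (d : ℕ) {c : ℝ} (hc : 0 < c) :
    Integrable (fun ξ : EuclideanSpace ℝ (Fin d) => Real.exp (-c * ‖ξ‖ ^ 2)) := by
  have h := (GaussianFourier.integrable_cexp_neg_mul_sq_norm_add
      (V := EuclideanSpace ℝ (Fin d)) (b := (c : ℂ)) (by simpa using hc) 0 0).norm
  refine h.congr ?_
  filter_upwards with v
  rw [Complex.norm_exp]
  norm_num
  left
  norm_cast

private lemma integrable_sq_exp_gauss (d : ℕ) {c : ℝ} (hc : 0 < c) :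
    Integrable (fun ξ : EuclideanSpace ℝ (Fin d) => ‖ξ‖ ^ 2 * Real.exp (-c * ‖ξ‖ ^ 2)) := by
  refine ((integrable_exp_gauss d (half_pos hc)).const_mul (2 / c)).mono' ?_ ?_
  · apply Continuous.aestronglyMeasurable
    continuity
  · filter_upwards with ξ
    rw [Real.norm_eq_abs, abs_of_nonneg (by positivity)]
    have key : ‖ξ‖ ^ 2 ≤ 2 / c * Real.exp (c / 2 * ‖ξ‖ ^ 2) := by
      have h := Real.add_one_le_exp (c / 2 * ‖ξ‖ ^ 2)
      rw [div_mul_eq_mul_div, le_div_iff₀ hc]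
      nlinarith
    calc ‖ξ‖ ^ 2 * Real.exp (-c * ‖ξ‖ ^ 2)
        ≤ (2 / c * Real.exp (c / 2 * ‖ξ‖ ^ 2)) * Real.exp (-c * ‖ξ‖ ^ 2) :=
          mul_le_mul_of_nonneg_right key (Real.exp_pos _).le
      _ = 2 / c * Real.exp (-(c / 2) * ‖ξ‖ ^ 2) := by
          rw [mul_assoc, ← Real.exp_add]; ring_nf

/-- pointwise estimate on the flux `J`: there are constants `C, C_M > 0`
depending only on `d` and `D` such that for every `ε > 0`, `r ∈ (0,1]` and nonnegative
measurable `f` with `ρ := ∫ f ∈ (0,∞)` and `∫ |ξ| f < ∞`, the flux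
`J := ε⁻¹ ∫ ξ (f(ξ) − ρM(ξ)) dξ` satisfies
`|J| ≤ r ε ∫ 𝒟 + C r^{−d} exp(2C_M/r²) ρ^{1/2} (∫ 𝒟)^{1/2}` in `[0,∞]`. -/
theorem pointwise_estimate_J (d : ℕ) (hd : 1 ≤ d) (D : ℝ) (hD : 0 < D) :
    ∃ C > (0 : ℝ), ∃ CM > (0 : ℝ),
      ∀ ε : ℝ, 0 < ε → ∀ r : ℝ, 0 < r → r ≤ 1 →
      ∀ f : EuclideanSpace ℝ (Fin d) → ℝ, Measurable f → (∀ ξ, 0 ≤ f ξ) →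
        Integrable f → 0 < ∫ ξ, f ξ →
        Integrable (fun ξ => ‖ξ‖ * f ξ) →
        ENNReal.ofReal
            ‖ε⁻¹ • ∫ ξ, (f ξ - (∫ η, f η) * maxwellian d D ξ) • ξ‖ ≤
          ENNReal.ofReal (r * ε) * (∫⁻ ξ, dissipation d D ε (∫ η, f η) f ξ) +
            ENNReal.ofReal (C * r ^ (-(d : ℝ)) * Real.exp (2 * CM / r ^ 2) *
                Real.sqrt (∫ η, f η)) *
              (∫⁻ ξ, dissipation d D ε (∫ η, f η) f ξ) ^ (1 / 2 : ℝ) := by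
  
  have hc : (0:ℝ) < (2 * Real.pi * D) ^ (-(d : ℝ) / 2) :=
    Real.rpow_pos_of_pos (by positivity) _
  set c : ℝ := (2 * Real.pi * D) ^ (-(d : ℝ) / 2) with hc_def
  set K0 : ℝ := ∫ ξ : EuclideanSpace ℝ (Fin d), ‖ξ‖ ^ 2 * Real.exp (-(1/(4*D)) * ‖ξ‖ ^ 2)
    with hK0_def
  have hK0 : 0 ≤ K0 := integral_nonneg (fun ξ => by positivity)
  have hC0 : (0:ℝ) < Real.sqrt (4 * c * K0) + 1 := by positivity
  set C0 : ℝ := Real.sqrt (4 * c * K0) + 1 with hC0_def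
  have hC0sq : 4 * c * K0 ≤ C0 ^ 2 := by
    have h := Real.sq_sqrt (by positivity : (0:ℝ) ≤ 4 * c * K0)
    nlinarith [Real.sqrt_nonneg (4 * c * K0)]
  refine ⟨C0, hC0, D, hD, ?_⟩
  intro ε hε r hr hr1 f hfmeas hf0 hfint hρ hfnorm
  set ρ : ℝ := ∫ η, f η with hρ_def
  have hM_pos : ∀ ξ : EuclideanSpace ℝ (Fin d), 0 < maxwellian d D ξ := fun ξ => by
    rw [maxwellian, ← hc_def]
    positivity
  have hM_cont : Continuous (maxwellian d D) := by
    unfold maxwellian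
    exact continuous_const.mul (Real.continuous_exp.comp (by fun_prop))
  have hb_pos : ∀ ξ, 0 < ρ * maxwellian d D ξ := fun ξ => mul_pos hρ (hM_pos ξ)
  have hb_meas : Measurable fun ξ : EuclideanSpace ℝ (Fin d) => ρ * maxwellian d D ξ :=
    hM_cont.measurable.const_mul ρ
  set H : EuclideanSpace ℝ (Fin d) → ℝ≥0∞ := fun ξ =>
    if f ξ = 0 then ⊤
    else ENNReal.ofReal ((f ξ - ρ * maxwellian d D ξ)
      * (Real.log (f ξ) - Real.log (ρ * maxwellian d D ξ))) with hH_def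
  have hH_meas : Measurable H := by
    apply Measurable.ite (hfmeas (measurableSet_singleton 0)) measurable_const
    exact ((hfmeas.sub hb_meas).mul
      ((Real.measurable_log.comp hfmeas).sub
        (Real.measurable_log.comp hb_meas))).ennreal_ofReal
  set I : ℝ≥0∞ := ∫⁻ ξ, H ξ with hI_def
  have hdiss : ∀ ξ, dissipation d D ε ρ f ξ = ENNReal.ofReal ((ε ^ 2)⁻¹) * H ξ := by
    intro ξ
    rw [dissipation]
    simp only [hH_def]
    by_cases h : f ξ = 0
    · rw [if_pos ⟨h, (hb_pos ξ).ne'⟩, if_pos h,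
        ENNReal.mul_top (ENNReal.ofReal_pos.2 (by positivity)).ne']
    · rw [if_neg (by tauto), if_neg h, ← ENNReal.ofReal_mul (by positivity)]
      congr 1
      field_simp
  have hI_eq : ∫⁻ ξ, dissipation d D ε ρ f ξ = ENNReal.ofReal ((ε ^ 2)⁻¹) * I := by
    rw [hI_def, ← lintegral_const_mul' _ _ ENNReal.ofReal_ne_top]
    exact lintegral_congr hdiss
  set G : EuclideanSpace ℝ (Fin d) → ℝ := fun ξ =>
    2 * ‖ξ‖ * Real.exp (‖ξ‖ / (2 * r)) * Real.sqrt (ρ * maxwellian d D ξ) with hG_def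
  set S : EuclideanSpace ℝ (Fin d) → ℝ := fun ξ =>
    |Real.sqrt (f ξ) - Real.sqrt (ρ * maxwellian d D ξ)| with hS_def
  have hG0 : ∀ ξ, 0 ≤ G ξ := fun ξ => by
    simp only [hG_def]; positivity
  have hG_meas : Measurable fun ξ => ENNReal.ofReal (G ξ) := by
    apply Measurable.ennreal_ofReal
    simp only [hG_def]
    fun_prop
  have hS_meas : Measurable fun ξ => ENNReal.ofReal (S ξ) := by
    apply Measurable.ennreal_ofReal
    simp only [hS_def]
    exact ((Real.continuous_sqrt.measurable.comp hfmeas).sub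
      (Real.continuous_sqrt.measurable.comp hb_meas)).abs
  -- Step 1
  have step1 : ENNReal.ofReal ‖ε⁻¹ • ∫ ξ, (f ξ - ρ * maxwellian d D ξ) • ξ‖
      ≤ ENNReal.ofReal ε⁻¹
        * ∫⁻ ξ, ENNReal.ofReal (|f ξ - ρ * maxwellian d D ξ| * ‖ξ‖) := by
    rw [norm_smul, Real.norm_eq_abs, abs_of_pos (by positivity : (0:ℝ) < ε⁻¹),
      ENNReal.ofReal_mul (by positivity)]
    apply mul_le_mul_right
    rw [ofReal_norm]
    refine le_trans (enorm_integral_le_lintegral_enorm _) ?_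
    apply lintegral_mono
    intro ξ
    simp only []
    rw [← ofReal_norm, norm_smul, Real.norm_eq_abs]
  -- Step 2
  have step2 : ∀ ξ, ENNReal.ofReal (|f ξ - ρ * maxwellian d D ξ| * ‖ξ‖)
      ≤ ENNReal.ofReal r * H ξ + ENNReal.ofReal (G ξ) * ENNReal.ofReal (S ξ) := by
    intro ξ
    by_cases h : f ξ = 0
    · have hHt : H ξ = ⊤ := by simp only [hH_def]; rw [if_pos h]
      rw [hHt, ENNReal.mul_top (ENNReal.ofReal_pos.2 hr).ne', top_add]
      exact le_top
    · have hfpos : 0 < f ξ := lt_of_le_of_ne (hf0 ξ) (Ne.symm h)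
      have key := key_pointwise hfpos (hb_pos ξ) hr (norm_nonneg ξ)
      have hHv : H ξ = ENNReal.ofReal ((f ξ - ρ * maxwellian d D ξ)
          * (Real.log (f ξ) - Real.log (ρ * maxwellian d D ξ))) := by
        simp only [hH_def]; rw [if_neg h]
      rw [hHv]
      simp only [hG_def, hS_def]
      rw [ ← ENNReal.ofReal_mul hr.le,
        ← ENNReal.ofReal_mul (by positivity), ← ENNReal.ofReal_add
          (mul_nonneg hr.le (by
            rw [diff_mul_log_eq_abs hfpos (hb_pos ξ)]; positivity))
          (by positivity)]
      apply ENNReal.ofReal_le_ofReal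
      calc |f ξ - ρ * maxwellian d D ξ| * ‖ξ‖ = ‖ξ‖ * |f ξ - ρ * maxwellian d D ξ| :=
            mul_comm _ _
        _ ≤ _ := key
  -- Step 3
  have step3 : ∫⁻ ξ, (ENNReal.ofReal r * H ξ + ENNReal.ofReal (G ξ) * ENNReal.ofReal (S ξ))
      = ENNReal.ofReal r * I + ∫⁻ ξ, ENNReal.ofReal (G ξ) * ENNReal.ofReal (S ξ) := by
    rw [lintegral_add_left (hH_meas.const_mul _),
      lintegral_const_mul' _ _ ENNReal.ofReal_ne_top, hI_def]
  -- Step 4 : Cauchy-Schwarz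
  have step4 : ∫⁻ ξ, ENNReal.ofReal (G ξ) * ENNReal.ofReal (S ξ)
      ≤ (∫⁻ ξ, ENNReal.ofReal (G ξ) ^ (2:ℝ)) ^ (1/2:ℝ)
        * (∫⁻ ξ, ENNReal.ofReal (S ξ) ^ (2:ℝ)) ^ (1/2:ℝ) := by
    have hpq : Real.HolderConjugate 2 2 := Real.HolderConjugate.two_two
    simpa using ENNReal.lintegral_mul_le_Lp_mul_Lq volume hpq
      hG_meas.aemeasurable hS_meas.aemeasurable
  -- Step 5
  have step5 : ∫⁻ ξ, ENNReal.ofReal (S ξ) ^ (2:ℝ) ≤ I := by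
    rw [hI_def]
    apply lintegral_mono
    intro ξ
    by_cases h : f ξ = 0
    · have hHt : H ξ = ⊤ := by simp only [hH_def]; rw [if_pos h]
      rw [hHt]; exact le_top
    · have hfpos : 0 < f ξ := lt_of_le_of_ne (hf0 ξ) (Ne.symm h)
      have hHv : H ξ = ENNReal.ofReal ((f ξ - ρ * maxwellian d D ξ)
          * (Real.log (f ξ) - Real.log (ρ * maxwellian d D ξ))) := by
        simp only [hH_def]; rw [if_neg h]
      rw [hHv]
      simp only [hS_def]
      rw [ ENNReal.ofReal_rpow_of_nonneg (abs_nonneg _) (by norm_num)]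
      apply ENNReal.ofReal_le_ofReal
      rw [show (2:ℝ) = ((2:ℕ):ℝ) by norm_num, Real.rpow_natCast, sq_abs]
      exact sqrt_diff_sq_le hfpos (hb_pos ξ)
  -- Step 6
  have step6 : ∫⁻ ξ, ENNReal.ofReal (G ξ) ^ (2:ℝ)
      ≤ ENNReal.ofReal ((4 * ρ * c * Real.exp (D / r ^ 2)) * K0) := by
    have hbound : ∀ ξ : EuclideanSpace ℝ (Fin d), G ξ ^ 2
        ≤ (4 * ρ * c * Real.exp (D / r ^ 2))
          * (‖ξ‖ ^ 2 * Real.exp (-(1/(4*D)) * ‖ξ‖ ^ 2)) := by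
      intro ξ
      have hexp2 : Real.exp (‖ξ‖ / (2 * r)) ^ 2 = Real.exp (‖ξ‖ / r) := by
        rw [sq, ← Real.exp_add]
        congr 1
        field_simp
        ring
      have hGsq : G ξ ^ 2 = 4 * ‖ξ‖ ^ 2 * Real.exp (‖ξ‖ / r)
          * (ρ * maxwellian d D ξ) := by
        calc G ξ ^ 2 = 4 * ‖ξ‖ ^ 2 * Real.exp (‖ξ‖ / (2 * r)) ^ 2
              * Real.sqrt (ρ * maxwellian d D ξ) ^ 2 := by simp only [hG_def]; ring
          _ = _ := by rw [hexp2, Real.sq_sqrt (hb_pos ξ).le]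
      rw [hGsq, maxwellian, ← hc_def]
      have hexpineq : ‖ξ‖ / r + -‖ξ‖ ^ 2 / (2 * D) ≤ D / r ^ 2 + -(1/(4*D)) * ‖ξ‖ ^ 2 := by
        have expand : D / r ^ 2 + -(1/(4*D)) * ‖ξ‖ ^ 2 - (‖ξ‖ / r + -‖ξ‖ ^ 2 / (2 * D))
            = (‖ξ‖ * r - 2 * D) ^ 2 / (4 * D * r ^ 2) := by
          field_simp
          ring
        have hnn : (0:ℝ) ≤ (‖ξ‖ * r - 2 * D) ^ 2 / (4 * D * r ^ 2) := by positivity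
        linarith
      calc 4 * ‖ξ‖ ^ 2 * Real.exp (‖ξ‖ / r)
            * (ρ * (c * Real.exp (-‖ξ‖ ^ 2 / (2 * D))))
          = 4 * ‖ξ‖ ^ 2 * ρ * c
            * (Real.exp (‖ξ‖ / r) * Real.exp (-‖ξ‖ ^ 2 / (2 * D))) := by ring
        _ = 4 * ‖ξ‖ ^ 2 * ρ * c * Real.exp (‖ξ‖ / r + -‖ξ‖ ^ 2 / (2 * D)) := by
            rw [← Real.exp_add]
        _ ≤ 4 * ‖ξ‖ ^ 2 * ρ * c * Real.exp (D / r ^ 2 + -(1/(4*D)) * ‖ξ‖ ^ 2) := by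
            apply mul_le_mul_of_nonneg_left (Real.exp_le_exp.2 hexpineq) (by positivity)
        _ = (4 * ρ * c * Real.exp (D / r ^ 2))
            * (‖ξ‖ ^ 2 * Real.exp (-(1/(4*D)) * ‖ξ‖ ^ 2)) := by
            rw [Real.exp_add]; ring
    have hint : Integrable (fun ξ : EuclideanSpace ℝ (Fin d) =>
        (4 * ρ * c * Real.exp (D / r ^ 2))
          * (‖ξ‖ ^ 2 * Real.exp (-(1/(4*D)) * ‖ξ‖ ^ 2))) :=
      (integrable_sq_exp_gauss d (by positivity)).const_mul _
    calc ∫⁻ ξ, ENNReal.ofReal (G ξ) ^ (2:ℝ)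
        ≤ ∫⁻ ξ, ENNReal.ofReal ((4 * ρ * c * Real.exp (D / r ^ 2))
            * (‖ξ‖ ^ 2 * Real.exp (-(1/(4*D)) * ‖ξ‖ ^ 2))) := by
          apply lintegral_mono
          intro ξ
          simp only []
          rw [ENNReal.ofReal_rpow_of_nonneg (hG0 ξ) (by norm_num),
            show (2:ℝ) = ((2:ℕ):ℝ) by norm_num, Real.rpow_natCast]
          exact ENNReal.ofReal_le_ofReal (hbound ξ)
      _ = ENNReal.ofReal (∫ ξ : EuclideanSpace ℝ (Fin d),
            (4 * ρ * c * Real.exp (D / r ^ 2))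
              * (‖ξ‖ ^ 2 * Real.exp (-(1/(4*D)) * ‖ξ‖ ^ 2))) :=
          (ofReal_integral_eq_lintegral_ofReal hint
            (Filter.Eventually.of_forall fun ξ => by positivity)).symm
      _ = ENNReal.ofReal ((4 * ρ * c * Real.exp (D / r ^ 2)) * K0) := by
          rw [integral_const_mul, hK0_def]
  -- Step 7
  have step7 : (ENNReal.ofReal ((4 * ρ * c * Real.exp (D / r ^ 2)) * K0)) ^ (1/2:ℝ)
      ≤ ENNReal.ofReal (C0 * Real.sqrt ρ * Real.exp (D / (2 * r ^ 2))) := by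
    rw [ENNReal.ofReal_rpow_of_nonneg (by positivity) (by norm_num), ← Real.sqrt_eq_rpow]
    apply ENNReal.ofReal_le_ofReal
    have hexp : Real.exp (D / (2 * r ^ 2)) ^ 2 = Real.exp (D / r ^ 2) := by
      rw [sq, ← Real.exp_add]
      congr 1
      field_simp
      ring
    have hsqrho : Real.sqrt ρ ^ 2 = ρ := Real.sq_sqrt hρ.le
    have hsq : (4 * ρ * c * Real.exp (D / r ^ 2)) * K0
        ≤ (C0 * Real.sqrt ρ * Real.exp (D / (2 * r ^ 2))) ^ 2 := by
      calc (4 * ρ * c * Real.exp (D / r ^ 2)) * K0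
          = (4 * c * K0) * (ρ * Real.exp (D / r ^ 2)) := by ring
        _ ≤ C0 ^ 2 * (ρ * Real.exp (D / r ^ 2)) :=
            mul_le_mul_of_nonneg_right hC0sq (by positivity)
        _ = (C0 * Real.sqrt ρ * Real.exp (D / (2 * r ^ 2))) ^ 2 := by
            rw [mul_pow, mul_pow, hsqrho, hexp]; ring
    calc Real.sqrt ((4 * ρ * c * Real.exp (D / r ^ 2)) * K0)
        ≤ Real.sqrt ((C0 * Real.sqrt ρ * Real.exp (D / (2 * r ^ 2))) ^ 2) :=
          Real.sqrt_le_sqrt hsq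
      _ = C0 * Real.sqrt ρ * Real.exp (D / (2 * r ^ 2)) := by
          apply Real.sqrt_sq
          have : 0 ≤ Real.sqrt ρ := Real.sqrt_nonneg ρ
          positivity
  -- Combine
  have main : ENNReal.ofReal ‖ε⁻¹ • ∫ ξ, (f ξ - ρ * maxwellian d D ξ) • ξ‖
      ≤ ENNReal.ofReal ε⁻¹ * (ENNReal.ofReal r * I
        + ENNReal.ofReal (C0 * Real.sqrt ρ * Real.exp (D / (2 * r ^ 2)))
          * I ^ (1/2:ℝ)) := by
    refine step1.trans ?_
    apply mul_le_mul_right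
    refine (lintegral_mono step2).trans ?_
    rw [step3]
    apply add_le_add_right
    refine step4.trans ?_
    exact mul_le_mul' ((ENNReal.rpow_le_rpow step6 (by norm_num)).trans step7)
      (ENNReal.rpow_le_rpow step5 (by norm_num))
  rw [hI_eq]
  refine main.trans ?_
  have hE2 : (ENNReal.ofReal ((ε ^ 2)⁻¹)) ^ (1/2:ℝ) = ENNReal.ofReal ε⁻¹ := by
    rw [ENNReal.ofReal_rpow_of_pos (by positivity), ← Real.sqrt_eq_rpow,
      show (ε ^ 2)⁻¹ = (ε⁻¹) ^ 2 by rw [← inv_pow], Real.sqrt_sq (by positivity)]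
  rw [mul_add]
  apply add_le_add
  · rw [← mul_assoc, ← mul_assoc, ← ENNReal.ofReal_mul (by positivity),
      ← ENNReal.ofReal_mul (by positivity)]
    apply mul_le_mul_left
    apply ENNReal.ofReal_le_ofReal
    apply le_of_eq
    field_simp
  · rw [ENNReal.mul_rpow_of_nonneg _ _ (by norm_num : (0:ℝ) ≤ 1/2), hE2]
    have hreal : C0 * Real.sqrt ρ * Real.exp (D / (2 * r ^ 2))
        ≤ C0 * r ^ (-(d:ℝ)) * Real.exp (2 * D / r ^ 2) * Real.sqrt ρ := by
      have h1 : (1:ℝ) ≤ r ^ (-(d:ℝ)) :=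
        Real.one_le_rpow_of_pos_of_le_one_of_nonpos hr hr1
          (neg_nonpos.2 (Nat.cast_nonneg d))
      have h2 : Real.exp (D / (2 * r ^ 2)) ≤ Real.exp (2 * D / r ^ 2) := by
        apply Real.exp_le_exp.2
        rw [div_le_div_iff₀ (by positivity) (by positivity)]
        nlinarith [mul_pos hD (mul_pos hr hr)]
      calc C0 * Real.sqrt ρ * Real.exp (D / (2 * r ^ 2))
          ≤ C0 * Real.sqrt ρ * Real.exp (2 * D / r ^ 2) := by
            apply mul_le_mul_of_nonneg_left h2
            exact mul_nonneg hC0.le (Real.sqrt_nonneg _)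
        _ ≤ (C0 * Real.sqrt ρ * Real.exp (2 * D / r ^ 2)) * r ^ (-(d:ℝ)) := by
            apply le_mul_of_one_le_right _ h1
            exact mul_nonneg (mul_nonneg hC0.le (Real.sqrt_nonneg _)) (Real.exp_pos _).le
        _ = C0 * r ^ (-(d:ℝ)) * Real.exp (2 * D / r ^ 2) * Real.sqrt ρ := by ring
    calc ENNReal.ofReal ε⁻¹
          * (ENNReal.ofReal (C0 * Real.sqrt ρ * Real.exp (D / (2 * r ^ 2))) * I ^ (1/2:ℝ))
        ≤ ENNReal.ofReal ε⁻¹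
          * (ENNReal.ofReal (C0 * r ^ (-(d:ℝ)) * Real.exp (2 * D / r ^ 2) * Real.sqrt ρ)
            * I ^ (1/2:ℝ)) := by
          apply mul_le_mul_right
          exact mul_le_mul_left (ENNReal.ofReal_le_ofReal hreal) _
      _ = ENNReal.ofReal (C0 * r ^ (-(d:ℝ)) * Real.exp (2 * D / r ^ 2) * Real.sqrt ρ)
          * (ENNReal.ofReal ε⁻¹ * I ^ (1/2:ℝ)) := by ring
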